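/- Let f : [0,1] → 2^[0,1] be upper semicontinuous, surjective, with the intermediate value property, and suppose the inverse limit X = lim←{[0,1], f} is irreducible between points x = (x₀,x₁,…) and y = (y₀,y₁,…). For each k ≥ 0 define J_k = cl(∪_{n≥k} f^{n−k}[I_n]), where I_n is the closed interval with endpoints x_n and y_n. Then each J_k is a closed subinterval of [0,1] and f[J_{k+1}] = J_k. -/

import Mathlib

open Set Filter Topology

/-- The graph of a set-valued function on `[0,1]`. -/
def SVGraph (f : ℝ → Set ℝ) : Set (ℝ × ℝ) :=
  {p | p.1 ∈ Icc (0:ℝ) 1 ∧ p.2 ∈ f p.1}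

/-- Upper semicontinuous set-valued function `[0,1] → 2^[0,1]`:
nonempty compact values inside `[0,1]` and closed graph. -/
def USC (f : ℝ → Set ℝ) : Prop :=
  (∀ x ∈ Icc (0:ℝ) 1, (f x).Nonempty ∧ f x ⊆ Icc (0:ℝ) 1 ∧ IsCompact (f x)) ∧
    IsClosed (SVGraph f)

/-- The intermediate value property. -/
def IVP (f : ℝ → Set ℝ) : Prop :=
  ∀ x₁ ∈ Icc (0:ℝ) 1, ∀ x₂ ∈ Icc (0:ℝ) 1, x₁ ≠ x₂ →
    ∀ y₁ ∈ f x₁, ∀ y₂ ∈ f x₂, y₁ ≠ y₂ →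
      ∀ y ∈ Ioo (min y₁ y₂) (max y₁ y₂),
        ∃ x ∈ Ioo (min x₁ x₂) (max x₁ x₂), y ∈ f x

/-- The weak intermediate value property. -/
def WIVP (f : ℝ → Set ℝ) : Prop :=
  ∀ x₁ ∈ Icc (0:ℝ) 1, ∀ x₂ ∈ Icc (0:ℝ) 1, x₁ ≠ x₂ →
    ∀ y₁ ∈ f x₁, ∃ y₂ ∈ f x₂,
      ∀ y ∈ Icc (min y₁ y₂) (max y₁ y₂),
        ∃ x ∈ Icc (min x₁ x₂) (max x₁ x₂), y ∈ f x

/-- Weak continuity (from the left and the right) at each interior point. -/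
def WeakCont (f : ℝ → Set ℝ) : Prop :=
  ∀ x ∈ Ioo (0:ℝ) 1, ∀ y ∈ f x,
    (∃ u : ℕ → ℝ × ℝ, (∀ k, u k ∈ SVGraph f ∧ (u k).1 < x) ∧
      Tendsto u atTop (𝓝 (x, y))) ∧
    (∃ u : ℕ → ℝ × ℝ, (∀ k, u k ∈ SVGraph f ∧ x < (u k).1) ∧
      Tendsto u atTop (𝓝 (x, y)))

/-- `f` is almost nonfissile: the nonfissile points of the graph are dense in the graph. -/
def AlmostNonfissile (f : ℝ → Set ℝ) : Prop :=
  SVGraph f ⊆ closure {p | p ∈ SVGraph f ∧ f p.1 = {p.2}}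

/-- `f` is light: each fiber `{x : y ∈ f x}` has empty interior in `[0,1]`. -/
def Light (f : ℝ → Set ℝ) : Prop :=
  ∀ y : ℝ, ∀ U : Set ℝ, IsOpen U → (U ∩ Icc (0:ℝ) 1).Nonempty →
    ∃ x ∈ U ∩ Icc (0:ℝ) 1, y ∉ f x

/-- `f` is surjective onto `[0,1]`. -/
def Surj (f : ℝ → Set ℝ) : Prop :=
  ∀ y ∈ Icc (0:ℝ) 1, ∃ x ∈ Icc (0:ℝ) 1, y ∈ f x

/-- The `n`-fold set-valued composition of `f`. -/
def fIter (f : ℝ → Set ℝ) : ℕ → ℝ → Set ℝ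
  | 0, x => {x}
  | n + 1, x => ⋃ z ∈ fIter f n x, f z

/-- The image `f^n[A] = ⋃_{a ∈ A} f^n(a)`. -/
def imIter (f : ℝ → Set ℝ) (n : ℕ) (A : Set ℝ) : Set ℝ :=
  ⋃ a ∈ A, fIter f n a

/-- The inverse limit of the single bonding function `f` on `[0,1]`. -/
def InvLim (f : ℝ → Set ℝ) : Set (ℕ → ℝ) :=
  {z | (∀ i, z i ∈ Icc (0:ℝ) 1) ∧ ∀ i, z i ∈ f (z (i + 1))}

/-- `X` is irreducible between `x` and `y`: the only subcontinuum of `X`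
containing both is `X` itself. -/
def IrreducibleBetween (X : Set (ℕ → ℝ)) (x y : ℕ → ℝ) : Prop :=
  x ∈ X ∧ y ∈ X ∧
    ∀ K ⊆ X, IsCompact K → IsConnected K → x ∈ K → y ∈ K → K = X

-- auxiliary development


/-- Image of a set under a set-valued map. -/
def fImg (f : ℝ → Set ℝ) (C : Set ℝ) : Set ℝ := ⋃ t ∈ C, f t

lemma fImg_mono {f : ℝ → Set ℝ} {C D : Set ℝ} (h : C ⊆ D) : fImg f C ⊆ fImg f D :=
  biUnion_subset_biUnion_left h

lemma fImg_iUnion {f : ℝ → Set ℝ} {S : ℕ → Set ℝ} :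
    fImg f (⋃ m, S m) = ⋃ m, fImg f (S m) := by
  ext t; simp only [fImg, mem_iUnion, exists_prop]; tauto

lemma imIter_zero {f : ℝ → Set ℝ} (A : Set ℝ) : imIter f 0 A = A := by
  simp [imIter, fIter]

lemma fIter_succ {f : ℝ → Set ℝ} (n : ℕ) (a : ℝ) :
    fIter f (n+1) a = fImg f (fIter f n a) := rfl

lemma imIter_succ {f : ℝ → Set ℝ} (n : ℕ) (A : Set ℝ) :
    imIter f (n+1) A = fImg f (imIter f n A) := by
  ext t
  simp only [imIter, fIter_succ, fImg, mem_iUnion, exists_prop]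
  tauto

lemma fIter_succ' {f : ℝ → Set ℝ} (n : ℕ) (a : ℝ) :
    fIter f (n+1) a = imIter f n (f a) := by
  induction n with
  | zero => simp [fIter, imIter]
  | succ n ih =>
      rw [fIter_succ, ih, ← imIter_succ]

lemma imIter_succ' {f : ℝ → Set ℝ} (n : ℕ) (A : Set ℝ) :
    imIter f (n+1) A = imIter f n (fImg f A) := by
  ext t
  simp only [imIter, fIter_succ', fImg, mem_iUnion, exists_prop]
  tauto

lemma imIter_mono {f : ℝ → Set ℝ} (n : ℕ) {A B : Set ℝ} (h : A ⊆ B) :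
    imIter f n A ⊆ imIter f n B :=
  biUnion_subset_biUnion_left h

lemma graph_compact {f : ℝ → Set ℝ} (hf : USC f) : IsCompact (SVGraph f) := by
  refine IsCompact.of_isClosed_subset
    ((isCompact_Icc : IsCompact (Icc (0:ℝ) 1)).prod (isCompact_Icc : IsCompact (Icc (0:ℝ) 1)))
    hf.2 ?_
  rintro ⟨a, b⟩ ⟨h1, h2⟩
  exact ⟨h1, (hf.1 a h1).2.1 h2⟩

lemma fImg_subset_Icc {f : ℝ → Set ℝ} (hf : USC f) {C : Set ℝ} (hC : C ⊆ Icc (0:ℝ) 1) :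
    fImg f C ⊆ Icc (0:ℝ) 1 := by
  rintro s hs
  simp only [fImg, mem_iUnion, exists_prop] at hs
  obtain ⟨t, htC, hst⟩ := hs
  exact (hf.1 t (hC htC)).2.1 hst

lemma fImg_nonempty {f : ℝ → Set ℝ} (hf : USC f) {C : Set ℝ} (hC : C ⊆ Icc (0:ℝ) 1)
    (hne : C.Nonempty) : (fImg f C).Nonempty := by
  obtain ⟨t, ht⟩ := hne
  obtain ⟨s, hs⟩ := (hf.1 t (hC ht)).1
  exact ⟨s, mem_biUnion ht hs⟩

lemma fImg_compact {f : ℝ → Set ℝ} (hf : USC f) {K : Set ℝ} (hKc : IsClosed K)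
    (hK1 : K ⊆ Icc (0:ℝ) 1) : IsCompact (fImg f K) := by
  have hG : IsCompact (SVGraph f ∩ (K ×ˢ (univ : Set ℝ))) :=
    (graph_compact hf).inter_right (hKc.prod isClosed_univ)
  have heq : fImg f K = Prod.snd '' (SVGraph f ∩ (K ×ˢ (univ : Set ℝ))) := by
    ext s
    constructor
    · intro hs
      simp only [fImg, mem_iUnion, exists_prop] at hs
      obtain ⟨t, htK, hst⟩ := hs
      exact ⟨(t, s), ⟨⟨hK1 htK, hst⟩, ⟨htK, trivial⟩⟩, rfl⟩
    · rintro ⟨⟨t, s'⟩, ⟨⟨_, hfs⟩, ⟨htK, _⟩⟩, rfl⟩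
      exact mem_biUnion htK hfs
  rw [heq]
  exact hG.image continuous_snd

/-- closure of an ordConnected set of reals is ordConnected -/
lemma ordConn_closure {S : Set ℝ} (h : S.OrdConnected) : (closure S).OrdConnected := by
  constructor
  intro u hu v hv w hw
  rcases eq_or_lt_of_le hw.1 with rfl | huw
  · exact hu
  rcases eq_or_lt_of_le hw.2 with rfl | hwv
  · exact hv
  obtain ⟨u', hu'S, hu'd⟩ := Metric.mem_closure_iff.1 hu (w - u) (by linarith)
  obtain ⟨v', hv'S, hv'd⟩ := Metric.mem_closure_iff.1 hv (v - w) (by linarith)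
  rw [Real.dist_eq, abs_lt] at hu'd hv'd
  exact subset_closure (h.out hu'S hv'S ⟨by linarith, by linarith⟩)

/-- between an element of S and a closure point, strictly, you are in S -/
lemma mem_of_between {S : Set ℝ} (hSo : S.OrdConnected) {t'' t w : ℝ} (ht'' : t'' ∈ S)
    (ht : t ∈ closure S) (hw : w ∈ Ioo (min t'' t) (max t'' t)) : w ∈ S := by
  rcases lt_trichotomy t'' t with h | h | h
  · rw [min_eq_left h.le, max_eq_right h.le] at hw
    obtain ⟨t₃, ht₃S, hd⟩ := Metric.mem_closure_iff.1 ht (t - w) (by linarith [hw.2])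
    rw [Real.dist_eq, abs_lt] at hd
    exact hSo.out ht'' ht₃S ⟨hw.1.le, by linarith [hw.2]⟩
  · rw [h] at hw; simp at hw
  · rw [min_eq_right h.le, max_eq_left h.le] at hw
    obtain ⟨t₃, ht₃S, hd⟩ := Metric.mem_closure_iff.1 ht (w - t) (by linarith [hw.1])
    rw [Real.dist_eq, abs_lt] at hd
    exact hSo.out ht₃S ht'' ⟨by linarith [hw.1], hw.2.le⟩

/-- Values of `f` are order-connected. -/
lemma val_ordConn {f : ℝ → Set ℝ} (hf : USC f) (hs : Surj f) (hi : IVP f) {x : ℝ}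
    (hx : x ∈ Icc (0:ℝ) 1) : (f x).OrdConnected := by
  constructor
  intro c hc d hd yy hyy
  obtain ⟨hy1, hy2⟩ := hyy
  by_contra hyn
  set y := yy with hy
  have hcy : c < y := lt_of_le_of_ne hy1 (by rintro rfl; exact hyn hc)
  have hyd : y < d := lt_of_le_of_ne hy2 (by rintro rfl; exact hyn hd)
  have hfsub := (hf.1 x hx).2.1
  have hy01 : y ∈ Icc (0:ℝ) 1 := ⟨le_trans (hfsub hc).1 hy1, le_trans hy2 (hfsub hd).2⟩
  -- ε-ball around y missing f x
  have hfxcl : IsClosed (f x) := (hf.1 x hx).2.2.isClosed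
  obtain ⟨ε, hε, hball⟩ := Metric.isOpen_iff.1 hfxcl.isOpen_compl y hyn
  set δ : ℝ := min (ε/2) (min ((y - c)/2) ((d - y)/2)) with hδdef
  have hδ : 0 < δ := by
    apply lt_min (by linarith) (lt_min (by linarith) (by linarith))
  have hδε : δ ≤ ε/2 := min_le_left _ _
  have hδc : δ ≤ (y - c)/2 := le_trans (min_le_right _ _) (min_le_left _ _)
  have hδd : δ ≤ (d - y)/2 := le_trans (min_le_right _ _) (min_le_right _ _)
  have hδball : Icc (y-δ) (y+δ) ⊆ Metric.ball y ε := by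
    intro z hz
    rw [Metric.mem_ball, Real.dist_eq, abs_lt]
    obtain ⟨hz1, hz2⟩ := hz
    constructor <;> linarith
  obtain ⟨x', hx'01, hyx'⟩ := hs y hy01
  have hxx' : x ≠ x' := by rintro rfl; exact hyn hyx'
  set a : ℝ := min x x'
  set b : ℝ := max x x'
  have hab01 : Icc a b ⊆ Icc (0:ℝ) 1 := by
    intro z hz
    exact ⟨le_trans (le_min hx.1 hx'01.1) hz.1, le_trans hz.2 (max_le hx.2 hx'01.2)⟩
  set G := SVGraph f ∩ (Icc a b ×ˢ Icc (y-δ) (y+δ)) with hGdef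
  have hGc : IsCompact G := (graph_compact hf).inter_right (isClosed_Icc.prod isClosed_Icc)
  have hGne : ((x', y) : ℝ × ℝ) ∈ G :=
    ⟨⟨hx'01, hyx'⟩, ⟨⟨min_le_right _ _, le_max_right _ _⟩, ⟨by linarith, by linarith⟩⟩⟩
  obtain ⟨p, hpG, hpmin⟩ := hGc.exists_isMinOn ⟨_, hGne⟩
    ((continuous_fst.sub continuous_const).abs.continuousOn :
      ContinuousOn (fun q : ℝ × ℝ => |q.1 - x|) G)
  have hts : p.2 ∈ f p.1 := hpG.1.2
  have ht01 : p.1 ∈ Icc (0:ℝ) 1 := hpG.1.1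
  have htab : p.1 ∈ Icc a b := hpG.2.1
  have hsδ : p.2 ∈ Icc (y-δ) (y+δ) := hpG.2.2
  have htx : p.1 ≠ x := by
    rintro h
    exact hball (hδball hsδ) (h ▸ hts)
  have hkey : ∀ y₁ ∈ f x, ∀ w : ℝ, y₁ ≠ p.2 → w ∈ Ioo (min y₁ p.2) (max y₁ p.2) →
      w ∈ Icc (y-δ) (y+δ) → False := by
    intro y₁ hy₁ w hne hwI hwδ
    obtain ⟨x₃, hx₃Ioo, hwf⟩ := hi x hx p.1 ht01 (Ne.symm htx) y₁ hy₁ p.2 hts hne w hwI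
    have hxab : x ∈ Icc a b := ⟨min_le_left _ _, le_max_left _ _⟩
    have hx₃ab : x₃ ∈ Icc a b :=
      ⟨le_trans (le_min hxab.1 htab.1) hx₃Ioo.1.le, le_trans hx₃Ioo.2.le (max_le hxab.2 htab.2)⟩
    have hx₃G : ((x₃, w) : ℝ × ℝ) ∈ G := ⟨⟨hab01 hx₃ab, hwf⟩, hx₃ab, hwδ⟩
    have hmin := isMinOn_iff.1 hpmin (x₃, w) hx₃G
    have hlt : |x₃ - x| < |p.1 - x| := by
      rcases Ne.lt_or_gt htx with h | h
      · rw [min_eq_right h.le, max_eq_left h.le] at hx₃Ioo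
        rw [abs_of_neg (by linarith [hx₃Ioo.2] : x₃ - x < 0),
          abs_of_neg (by linarith : p.1 - x < 0)]
        linarith [hx₃Ioo.1]
      · rw [min_eq_left h.le, max_eq_right h.le] at hx₃Ioo
        rw [abs_of_pos (by linarith [hx₃Ioo.1] : 0 < x₃ - x),
          abs_of_pos (by linarith : 0 < p.1 - x)]
        linarith [hx₃Ioo.2]
    have hmin : |p.1 - x| ≤ |x₃ - x| := hmin
    linarith
  rcases lt_trichotomy p.2 y with h | h | h
  · -- p.2 < y : use y₁ = d, w = (p.2 + y)/2
    have hpd : p.2 < d := by linarith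
    refine hkey d hd ((p.2 + y)/2) hpd.ne' ?_ ?_
    · rw [min_eq_right hpd.le, max_eq_left hpd.le]
      exact ⟨by linarith, by linarith⟩
    · exact ⟨by linarith [hsδ.1], by linarith⟩
  · -- p.2 = y : use y₁ = c, w = y - δ/2
    have hcp : c < p.2 := by rw [h]; linarith
    refine hkey c hc (y - δ/2) hcp.ne ?_ ?_
    · rw [min_eq_left hcp.le, max_eq_right hcp.le, h]
      exact ⟨by linarith, by linarith⟩
    · exact ⟨by linarith, by linarith⟩
  · -- y < p.2 : use y₁ = c, w = (p.2 + y)/2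
    have hcp : c < p.2 := by linarith
    refine hkey c hc ((p.2 + y)/2) hcp.ne ?_ ?_
    · rw [min_eq_left hcp.le, max_eq_right hcp.le]
      exact ⟨by linarith, by linarith⟩
    · exact ⟨by linarith, by linarith [hsδ.2]⟩

/-- Image of an order-connected subset of `[0,1]` is order-connected. -/
lemma fImg_ordConn {f : ℝ → Set ℝ} (hf : USC f) (hs : Surj f) (hi : IVP f) {C : Set ℝ}
    (hC1 : C ⊆ Icc (0:ℝ) 1) (hCo : C.OrdConnected) : (fImg f C).OrdConnected := by
  constructor
  intro u hu v hv w hw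
  simp only [fImg, mem_iUnion, exists_prop] at hu hv ⊢
  obtain ⟨x₁, hx₁C, hu⟩ := hu
  obtain ⟨x₂, hx₂C, hv⟩ := hv
  rcases eq_or_lt_of_le hw.1 with rfl | huw
  · exact ⟨x₁, hx₁C, hu⟩
  rcases eq_or_lt_of_le hw.2 with rfl | hwv
  · exact ⟨x₂, hx₂C, hv⟩
  by_cases hx12 : x₁ = x₂
  · subst hx12
    exact ⟨x₁, hx₁C, (val_ordConn hf hs hi (hC1 hx₁C)).out hu hv ⟨huw.le, hwv.le⟩⟩
  · have huv : u < v := lt_trans huw hwv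
    obtain ⟨x₃, hx₃Ioo, hwf⟩ := hi x₁ (hC1 hx₁C) x₂ (hC1 hx₂C) hx12 u hu v hv huv.ne w
      (by rw [min_eq_left huv.le, max_eq_right huv.le]; exact ⟨huw, hwv⟩)
    refine ⟨x₃, ?_, hwf⟩
    have : Ioo (min x₁ x₂) (max x₁ x₂) ⊆ uIcc x₁ x₂ := Ioo_subset_Icc_self
    exact hCo.uIcc_subset hx₁C hx₂C (this hx₃Ioo)

/-- weak continuity: the image of the closure is the closure of the image. -/
lemma fImg_closure {f : ℝ → Set ℝ} (hf : USC f) (hs : Surj f) (hi : IVP f) {S : Set ℝ}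
    (hS1 : S ⊆ Icc (0:ℝ) 1) (hSn : S.Nonempty) (hSo : S.OrdConnected) :
    fImg f (closure S) = closure (fImg f S) := by
  have hcl1 : closure S ⊆ Icc (0:ℝ) 1 := closure_minimal hS1 isClosed_Icc
  apply Subset.antisymm
  · -- f[cl S] ⊆ cl f[S]
    intro s hsmem
    simp only [fImg, mem_iUnion, exists_prop] at hsmem
    obtain ⟨t, ht, hsf⟩ := hsmem
    by_cases htS : t ∈ S
    · exact subset_closure (mem_biUnion htS hsf)
    rw [Metric.mem_closure_iff]
    intro ε hε
    obtain ⟨t'', ht''S⟩ := hSn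
    have hne : t'' ≠ t := fun h => htS (h ▸ ht''S)
    obtain ⟨s'', hs''⟩ := (hf.1 t'' (hS1 ht''S)).1
    by_cases hss : s'' = s
    · exact ⟨s, mem_biUnion ht''S (hss ▸ hs''), by simp [hε]⟩
    have main : ∀ w : ℝ, w ∈ Ioo (min s'' s) (max s'' s) → dist s w < ε →
        ∃ b ∈ fImg f S, dist s b < ε := by
      intro w hwI hwd
      obtain ⟨x₃, hx₃Ioo, hwf⟩ :=
        hi t'' (hS1 ht''S) t (hcl1 ht) hne s'' hs'' s hsf hss w hwI
      have hx₃S : x₃ ∈ S := mem_of_between hSo ht''S ht hx₃Ioo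
      exact ⟨w, mem_biUnion hx₃S hwf, hwd⟩
    rcases Ne.lt_or_gt hss with h | h
    · -- s'' < s
      set m : ℝ := min ε (s - s'') with hm
      have hm0 : 0 < m := lt_min hε (by linarith)
      have hm1 : m ≤ ε := min_le_left _ _
      have hm2 : m ≤ s - s'' := min_le_right _ _
      refine main (s - m/2) ?_ ?_
      · rw [min_eq_left h.le, max_eq_right h.le]
        exact ⟨by linarith, by linarith⟩
      · rw [Real.dist_eq, abs_of_pos (by linarith : (0:ℝ) < s - (s - m/2))]; linarith
    · -- s < s''
      set m : ℝ := min ε (s'' - s) with hm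
      have hm0 : 0 < m := lt_min hε (by linarith)
      have hm1 : m ≤ ε := min_le_left _ _
      have hm2 : m ≤ s'' - s := min_le_right _ _
      refine main (s + m/2) ?_ ?_
      · rw [min_eq_right h.le, max_eq_left h.le]
        exact ⟨by linarith, by linarith⟩
      · rw [Real.dist_eq, abs_of_neg (by linarith : s - (s + m/2) < 0)]; linarith
  · exact closure_minimal (fImg_mono subset_closure)
      (fImg_compact hf isClosed_closure hcl1).isClosed

lemma imIter_props {f : ℝ → Set ℝ} (hf : USC f) (hs : Surj f) (hi : IVP f) (n : ℕ) {C : Set ℝ}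
    (hC1 : C ⊆ Icc (0:ℝ) 1) (hCn : C.Nonempty) (hCo : C.OrdConnected) :
    imIter f n C ⊆ Icc (0:ℝ) 1 ∧ (imIter f n C).Nonempty ∧ (imIter f n C).OrdConnected := by
  induction n with
  | zero => rw [imIter_zero]; exact ⟨hC1, hCn, hCo⟩
  | succ n ih =>
      rw [imIter_succ]
      exact ⟨fImg_subset_Icc hf ih.1, fImg_nonempty hf ih.1 ih.2.1,
        fImg_ordConn hf hs hi ih.1 ih.2.2⟩

/-- closure of a nonempty bounded ordConnected set is a closed interval -/
lemma closure_eq_Icc {S : Set ℝ} (hS1 : S ⊆ Icc (0:ℝ) 1) (hSn : S.Nonempty)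
    (hSo : S.OrdConnected) :
    ∃ a b : ℝ, a ≤ b ∧ Icc a b ⊆ Icc (0:ℝ) 1 ∧ closure S = Icc a b := by
  set T := closure S with hT
  have hT1 : T ⊆ Icc (0:ℝ) 1 := closure_minimal hS1 isClosed_Icc
  have hTc : IsCompact T :=
    IsCompact.of_isClosed_subset (isCompact_Icc : IsCompact (Icc (0:ℝ) 1)) isClosed_closure hT1
  have hTn : T.Nonempty := hSn.closure
  have hTo : T.OrdConnected := ordConn_closure hSo
  refine ⟨sInf T, sSup T, ?_, ?_, ?_⟩
  · exact csInf_le_csSup hTn hTc.bddBelow hTc.bddAbove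
  · intro z hz
    have h1 := hT1 (hTc.sInf_mem hTn)
    have h2 := hT1 (hTc.sSup_mem hTn)
    exact ⟨le_trans h1.1 hz.1, le_trans hz.2 h2.2⟩
  · apply Subset.antisymm
    · intro z hz
      exact ⟨csInf_le hTc.bddBelow hz, le_csSup hTc.bddAbove hz⟩
    · exact hTo.out (hTc.sInf_mem hTn) (hTc.sSup_mem hTn)

/-- each `J_k = cl(⋃_{n ≥ k} f^{n-k}[I_n])` is a closed subinterval
of `[0,1]` and `f[J_{k+1}] = J_k`. -/
theorem stmt13 (f : ℝ → Set ℝ) (hf : USC f) (hsurj : Surj f) (hivp : IVP f)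
    (x y : ℕ → ℝ) (hirr : IrreducibleBetween (InvLim f) x y) :
    ∀ k : ℕ,
      (∃ a b : ℝ, a ≤ b ∧ Icc a b ⊆ Icc (0:ℝ) 1 ∧
        closure (⋃ m : ℕ, imIter f m (uIcc (x (m + k)) (y (m + k)))) = Icc a b) ∧
      (⋃ t ∈ closure (⋃ m : ℕ, imIter f m (uIcc (x (m + (k+1))) (y (m + (k+1))))), f t) =
        closure (⋃ m : ℕ, imIter f m (uIcc (x (m + k)) (y (m + k)))) := by
  obtain ⟨hxX, hyX, -⟩ := hirr
  obtain ⟨hx01, hxf⟩ := hxX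
  obtain ⟨hy01, hyf⟩ := hyX
  -- the basic intervals
  set I : ℕ → Set ℝ := fun n => uIcc (x n) (y n) with hI
  have hI1 : ∀ n, I n ⊆ Icc (0:ℝ) 1 := fun n =>
    (ordConnected_Icc).uIcc_subset (hx01 n) (hy01 n)
  have hIn : ∀ n, (I n).Nonempty := fun n => ⟨x n, left_mem_uIcc⟩
  have hIo : ∀ n, (I n).OrdConnected := fun n => ordConnected_uIcc
  -- one-step inclusion I n ⊆ f[I (n+1)]
  have hIstep : ∀ n, I n ⊆ fImg f (I (n+1)) := by
    intro n
    have ho : (fImg f (I (n+1))).OrdConnected :=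
      fImg_ordConn hf hsurj hivp (hI1 (n+1)) (hIo (n+1))
    exact ho.uIcc_subset (mem_biUnion left_mem_uIcc (hxf n)) (mem_biUnion right_mem_uIcc (hyf n))
  -- the sequences B m k and their union A k
  set B : ℕ → ℕ → Set ℝ := fun m k => imIter f m (I (m + k)) with hB
  set A : ℕ → Set ℝ := fun k => ⋃ m, B m k with hA
  have hBprops : ∀ m k, B m k ⊆ Icc (0:ℝ) 1 ∧ (B m k).Nonempty ∧ (B m k).OrdConnected :=
    fun m k => imIter_props hf hsurj hivp m (hI1 _) (hIn _) (hIo _)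
  have hBstep : ∀ m k, B m k ⊆ B (m+1) k := by
    intro m k
    have h1 : imIter f m (I (m + k)) ⊆ imIter f m (fImg f (I (m + k + 1))) :=
      imIter_mono m (hIstep (m + k))
    rw [← imIter_succ'] at h1
    have : m + 1 + k = m + k + 1 := by omega
    simpa [hB, this] using h1
  have hBmono : ∀ k m m', m ≤ m' → B m k ⊆ B m' k := by
    intro k m m' h
    induction h with
    | refl => exact Subset.rfl
    | step h ih => exact Subset.trans ih (hBstep _ _)
  have hAprops : ∀ k, A k ⊆ Icc (0:ℝ) 1 ∧ (A k).Nonempty ∧ (A k).OrdConnected := by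
    intro k
    refine ⟨iUnion_subset fun m => (hBprops m k).1,
      ((hBprops 0 k).2.1).mono (subset_iUnion _ 0), ?_⟩
    constructor
    intro u hu v hv w hw
    simp only [hA, mem_iUnion] at hu hv ⊢
    obtain ⟨m₁, hu⟩ := hu
    obtain ⟨m₂, hv⟩ := hv
    refine ⟨max m₁ m₂, ((hBprops (max m₁ m₂) k).2.2).out
      (hBmono k m₁ _ (le_max_left _ _) hu) (hBmono k m₂ _ (le_max_right _ _) hv) hw⟩
  -- f[A (k+1)] = A k
  have hfA : ∀ k, fImg f (A (k+1)) = A k := by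
    intro k
    have h1 : ∀ m, fImg f (B m (k+1)) = B (m+1) k := by
      intro m
      have : m + (k + 1) = m + 1 + k := by omega
      rw [hB, ← imIter_succ, this]
    rw [hA, fImg_iUnion]
    simp only [h1]
    apply Subset.antisymm
    · exact iUnion_subset fun m => subset_iUnion (fun m => B m k) (m+1)
    · exact iUnion_subset fun m => Subset.trans (hBstep m k) (subset_iUnion (fun m => B (m+1) k) m)
  intro k
  constructor
  · exact closure_eq_Icc (hAprops k).1 (hAprops k).2.1 (hAprops k).2.2
  · have h1 : (⋃ t ∈ closure (A (k+1)), f t) = fImg f (closure (A (k+1))) := rfl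
    calc (⋃ t ∈ closure (A (k+1)), f t)
        = closure (fImg f (A (k+1))) := by
          rw [h1, fImg_closure hf hsurj hivp (hAprops (k+1)).1 (hAprops (k+1)).2.1
            (hAprops (k+1)).2.2]
      _ = closure (A k) := by rw [hfA k]
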